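/- If ξ, ξ' ∈ S_{q,u} and ξ − ξ' is irrational, then ξ − ξ' ∈ S_{q,u}. -/
import Mathlib


open Filter

/-- Distance from a real number to the nearest integer. -/
noncomputable def distNearestInt (x : ℝ) : ℝ := |x - round x|

/-- The Liouville set `S_{q,u}` attached to a sequence `q` of positive integers and a
sequence `u` of positive reals. -/
def LSet (q : ℕ → ℕ) (u : ℕ → ℝ) : Set ℝ :=
  {ξ : ℝ | Irrational ξ ∧ ∃ κ₁ κ₂ : ℝ, 0 < κ₁ ∧ 0 < κ₂ ∧ ∃ b : ℕ → ℕ,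
    ∀ᶠ n in Filter.atTop, 1 ≤ b n ∧ (b n : ℝ) ≤ (q n : ℝ) ^ κ₁ ∧
      distNearestInt ((b n : ℝ) * ξ) ≤ (q n : ℝ) ^ (-(κ₂ * u n))}

lemma distNearestInt_le (x : ℝ) (k : ℤ) : distNearestInt x ≤ |x - k| := by
  by_contra h
  push_neg at h
  have h1 : |x - round x| ≤ 1 / 2 := abs_sub_round x
  have h2 : |(k : ℝ) - round x| < 1 := by
    calc |(k : ℝ) - round x| = |(x - round x) - (x - k)| := by ring_nf
    _ ≤ |x - round x| + |x - k| := abs_sub _ _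
    _ < 1 / 2 + 1 / 2 := by
        have := h.trans_le h1
        unfold distNearestInt at h
        linarith
    _ = 1 := by norm_num
  have h3 : ((|k - round x| : ℤ) : ℝ) < 1 := by push_cast; exact h2
  have h4 : |k - round x| < 1 := by exact_mod_cast h3
  have h5 : k = round x := by
    have := abs_lt.mp h4
    omega
  unfold distNearestInt at h
  rw [h5] at h
  exact absurd h (lt_irrefl _)

/-- If ξ, ξ' ∈ S_{q,u} and ξ − ξ' is irrational, then ξ − ξ' ∈ S_{q,u}. -/
theorem LSet_sub_mem (q : ℕ → ℕ) (u : ℕ → ℝ)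
    (hq : StrictMono q) (hqpos : ∀ n, 0 < q n)
    (hupos : ∀ n, 0 < u n) (hu : Filter.Tendsto u Filter.atTop Filter.atTop)
    (ξ ξ' : ℝ) (hξ : ξ ∈ LSet q u) (hξ' : ξ' ∈ LSet q u)
    (hirr : Irrational (ξ - ξ')) : ξ - ξ' ∈ LSet q u := by
  obtain ⟨-, κ₁, κ₂, hκ₁, hκ₂, b, hb⟩ := hξ
  obtain ⟨-, κ₁', κ₂', hκ₁', hκ₂', b', hb'⟩ := hξ'
  refine ⟨hirr, κ₁ + κ₁', min κ₂ κ₂' / 2, by positivity, by positivity,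
    fun n => b n * b' n, ?_⟩
  -- eventually, q n ≥ 2 and the exponent bound holds
  have hq2 : ∀ᶠ n in atTop, (2 : ℝ) ≤ (q n : ℝ) := by
    filter_upwards [eventually_ge_atTop 1] with n hn
    have : 2 ≤ q n := by
      have := hq.lt_iff_lt.mpr (show 0 < n from hn)
      have h0 := hqpos 0
      omega
    exact_mod_cast this
  set K : ℝ := min κ₂ κ₂' / 2
  have hK : 0 < K := by positivity
  have hKκ : K ≤ κ₂ / 2 := by
    have := min_le_left κ₂ κ₂'
    simp only [K]; linarith
  have hKκ' : K ≤ κ₂' / 2 := by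
    have := min_le_right κ₂ κ₂'
    simp only [K]; linarith
  have hu1 : ∀ᶠ n in atTop, κ₁' + (K - κ₂) * u n ≤ -1 := by
    have : Tendsto (fun n => (κ₂ - K) * u n) atTop atTop :=
      hu.const_mul_atTop (by linarith)
    filter_upwards [this.eventually_ge_atTop (κ₁' + 1)] with n hn
    linarith
  have hu2 : ∀ᶠ n in atTop, κ₁ + (K - κ₂') * u n ≤ -1 := by
    have : Tendsto (fun n => (κ₂' - K) * u n) atTop atTop :=
      hu.const_mul_atTop (by linarith)
    filter_upwards [this.eventually_ge_atTop (κ₁ + 1)] with n hn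
    linarith
  filter_upwards [hb, hb', hq2, hu1, hu2] with n ⟨hb1, hb2, hb3⟩ ⟨hb1', hb2', hb3'⟩
    hq2 hu1 hu2
  have hqpos' : (0 : ℝ) < (q n : ℝ) := by exact_mod_cast hqpos n
  refine ⟨Nat.one_le_iff_ne_zero.mpr (by positivity), ?_, ?_⟩
  · push_cast
    rw [Real.rpow_add hqpos']
    have h1 : (0 : ℝ) ≤ (b n : ℝ) := by positivity
    have h2 : (0 : ℝ) ≤ (q n : ℝ) ^ κ₁ := by positivity
    exact mul_le_mul hb2 hb2' (by positivity) h2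
  · -- main estimate
    set k := round ((b n : ℝ) * ξ)
    set k' := round ((b' n : ℝ) * ξ')
    set I : ℤ := (b' n : ℤ) * k - (b n : ℤ) * k' with hI
    have key : distNearestInt ((b n * b' n : ℕ) * (ξ - ξ'))
        ≤ |((b n * b' n : ℕ) : ℝ) * (ξ - ξ') - (I : ℝ)| :=
      distNearestInt_le _ I
    have expand : ((b n * b' n : ℕ) : ℝ) * (ξ - ξ') - (I : ℝ)
        = (b' n : ℝ) * ((b n : ℝ) * ξ - k) - (b n : ℝ) * ((b' n : ℝ) * ξ' - k') := by
      rw [hI]; push_cast; ring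
    have est : |((b n * b' n : ℕ) : ℝ) * (ξ - ξ') - (I : ℝ)|
        ≤ (b' n : ℝ) * distNearestInt ((b n : ℝ) * ξ)
          + (b n : ℝ) * distNearestInt ((b' n : ℝ) * ξ') := by
      rw [expand]
      unfold distNearestInt
      calc |(b' n : ℝ) * ((b n : ℝ) * ξ - k) - (b n : ℝ) * ((b' n : ℝ) * ξ' - k')|
          ≤ |(b' n : ℝ) * ((b n : ℝ) * ξ - k)| + |(b n : ℝ) * ((b' n : ℝ) * ξ' - k')| :=
            abs_sub _ _
        _ = (b' n : ℝ) * |(b n : ℝ) * ξ - k| + (b n : ℝ) * |(b' n : ℝ) * ξ' - k'| := by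
            rw [abs_mul, abs_mul, Nat.abs_cast, Nat.abs_cast]
    have bound1 : (b' n : ℝ) * distNearestInt ((b n : ℝ) * ξ)
        ≤ (q n : ℝ) ^ (κ₁' + -(κ₂ * u n)) := by
      rw [Real.rpow_add hqpos']
      exact mul_le_mul hb2' hb3 (abs_nonneg _) (by positivity)
    have bound2 : (b n : ℝ) * distNearestInt ((b' n : ℝ) * ξ')
        ≤ (q n : ℝ) ^ (κ₁ + -(κ₂' * u n)) := by
      rw [Real.rpow_add hqpos']
      exact mul_le_mul hb2 hb3' (abs_nonneg _) (by positivity)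
    have half1 : (q n : ℝ) ^ (κ₁' + -(κ₂ * u n)) ≤ (1 / 2) * (q n : ℝ) ^ (-(K * u n)) := by
      have h1 : (q n : ℝ) ^ (κ₁' + -(κ₂ * u n)) =
          (q n : ℝ) ^ (κ₁' + (K - κ₂) * u n) * (q n : ℝ) ^ (-(K * u n)) := by
        rw [← Real.rpow_add hqpos']; ring_nf
      rw [h1]
      have h2 : (q n : ℝ) ^ (κ₁' + (K - κ₂) * u n) ≤ (q n : ℝ) ^ (-1 : ℝ) :=
        Real.rpow_le_rpow_of_exponent_le (by linarith) hu1
      have h3 : (q n : ℝ) ^ (-1 : ℝ) ≤ 1 / 2 := by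
        rw [Real.rpow_neg_one]
        rw [inv_le_comm₀ hqpos' (by norm_num)]
        linarith
      have h4 : (0 : ℝ) < (q n : ℝ) ^ (-(K * u n)) := by positivity
      exact mul_le_mul (h2.trans h3) le_rfl (le_of_lt h4) (by norm_num)
    have half2 : (q n : ℝ) ^ (κ₁ + -(κ₂' * u n)) ≤ (1 / 2) * (q n : ℝ) ^ (-(K * u n)) := by
      have h1 : (q n : ℝ) ^ (κ₁ + -(κ₂' * u n)) =
          (q n : ℝ) ^ (κ₁ + (K - κ₂') * u n) * (q n : ℝ) ^ (-(K * u n)) := by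
        rw [← Real.rpow_add hqpos']; ring_nf
      rw [h1]
      have h2 : (q n : ℝ) ^ (κ₁ + (K - κ₂') * u n) ≤ (q n : ℝ) ^ (-1 : ℝ) :=
        Real.rpow_le_rpow_of_exponent_le (by linarith) hu2
      have h3 : (q n : ℝ) ^ (-1 : ℝ) ≤ 1 / 2 := by
        rw [Real.rpow_neg_one]
        rw [inv_le_comm₀ hqpos' (by norm_num)]
        linarith
      have h4 : (0 : ℝ) < (q n : ℝ) ^ (-(K * u n)) := by positivity
      exact mul_le_mul (h2.trans h3) le_rfl (le_of_lt h4) (by norm_num)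
    calc distNearestInt ((b n * b' n : ℕ) * (ξ - ξ'))
        ≤ (b' n : ℝ) * distNearestInt ((b n : ℝ) * ξ)
          + (b n : ℝ) * distNearestInt ((b' n : ℝ) * ξ') := key.trans est
      _ ≤ (1 / 2) * (q n : ℝ) ^ (-(K * u n)) + (1 / 2) * (q n : ℝ) ^ (-(K * u n)) := by
          linarith [bound1.trans half1, bound2.trans half2]
      _ = (q n : ℝ) ^ (-(K * u n)) := by ring
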